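/- Let v₁, v₂, v₃, v₄ ∈ ℤ² be four points in convex position (no vᵢ lies in the convex hull of the other three, and Q = conv{v₁,v₂,v₃,v₄} is two-dimensional) such that Q ∩ ℤ² = {v₁,v₂,v₃,v₄}. Then Q is unimodularly equivalent to the standard square conv{(0,0),(1,0),(1,1),(0,1)}. -/

import Mathlib

/-- The inclusion of lattice points `ℤ² ⊆ ℝ²` (coordinatewise coercion). -/
def toReal2 (v : Fin 2 → ℤ) : Fin 2 → ℝ := fun i => (v i : ℝ)

/-- The affine unimodular map `x ↦ A x + b` of `ℝ²` determined by an integer matrix `A`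
and an integer vector `b`. -/
def affineUnimodularMap (A : Matrix (Fin 2) (Fin 2) ℤ) (b : Fin 2 → ℤ) (x : Fin 2 → ℝ) :
    Fin 2 → ℝ :=
  (A.map (Int.cast : ℤ → ℝ)).mulVec x + toReal2 b

def Ddet (p q r : Fin 2 → ℤ) : ℤ :=
  (q 0 - p 0) * (r 1 - p 1) - (q 1 - p 1) * (r 0 - p 0)

lemma vec2_eq {x y : Fin 2 → ℤ} (h0 : x 0 = y 0) (h1 : x 1 = y 1) : x = y := by
  funext i; fin_cases i; exacts [h0, h1]

lemma tl00 : toReal2 ![0, 0] = (![0, 0] : Fin 2 → ℝ) := by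
  funext i; fin_cases i <;> simp [toReal2]
lemma tl10 : toReal2 ![1, 0] = (![1, 0] : Fin 2 → ℝ) := by
  funext i; fin_cases i <;> simp [toReal2]
lemma tl01 : toReal2 ![0, 1] = (![0, 1] : Fin 2 → ℝ) := by
  funext i; fin_cases i <;> simp [toReal2]
lemma tl11 : toReal2 ![1, 1] = (![1, 1] : Fin 2 → ℝ) := by
  funext i; fin_cases i <;> simp [toReal2]

lemma mem_hull3 (x y z : Fin 2 → ℝ) (α β γ : ℝ) (hα : 0 ≤ α) (hβ : 0 ≤ β) (hγ : 0 ≤ γ)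
    (h : α + β + γ = 1) :
    α • x + β • y + γ • z ∈ convexHull ℝ ({x, y, z} : Set (Fin 2 → ℝ)) := by
  have := Finset.centerMass_mem_convexHull (Finset.univ : Finset (Fin 3))
    (w := ![α, β, γ]) (z := ![x, y, z]) (s := ({x, y, z} : Set (Fin 2 → ℝ)))
    (by intro i _; fin_cases i <;> simpa)
    (by simp [Fin.sum_univ_three, h])
    (by intro i _; fin_cases i <;> simp)
  rw [Finset.centerMass] at this
  simpa [Fin.sum_univ_three, h] using this

lemma mem_hull2 (x y : Fin 2 → ℝ) (α β : ℝ) (hα : 0 ≤ α) (hβ : 0 ≤ β) (h : α + β = 1) :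
    α • x + β • y ∈ convexHull ℝ ({x, y} : Set (Fin 2 → ℝ)) := by
  have h3 := mem_hull3 x y y α β 0 hα hβ le_rfl (by linarith)
  simp only [zero_smul, add_zero] at h3
  have : ({x, y, y} : Set (Fin 2 → ℝ)) = {x, y} := by simp
  rwa [this] at h3

lemma toReal2_inj {p q : Fin 2 → ℤ} (h : toReal2 p = toReal2 q) : p = q := by
  funext i
  have := congrFun h i
  simpa [toReal2] using this

lemma cast_affine (A : Matrix (Fin 2) (Fin 2) ℤ) (b v : Fin 2 → ℤ) :
    affineUnimodularMap A b (toReal2 v) = toReal2 (A.mulVec v + b) := by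
  funext i
  simp [affineUnimodularMap, toReal2, Matrix.mulVec, dotProduct,
    Fin.sum_univ_two, Matrix.map_apply]
  fin_cases i <;> simp

lemma image_hull4 (A : Matrix (Fin 2) (Fin 2) ℤ) (b : Fin 2 → ℤ) (p q r s : Fin 2 → ℤ) :
    affineUnimodularMap A b ''
        convexHull ℝ ({toReal2 p, toReal2 q, toReal2 r, toReal2 s} : Set (Fin 2 → ℝ)) =
      convexHull ℝ ({toReal2 (A.mulVec p + b), toReal2 (A.mulVec q + b),
        toReal2 (A.mulVec r + b), toReal2 (A.mulVec s + b)} : Set (Fin 2 → ℝ)) := by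
  have hmv : ∀ (u v : Fin 2 → ℝ), (A.map (Int.cast : ℤ → ℝ)).mulVec (u + v)
      = (A.map (Int.cast : ℤ → ℝ)).mulVec u + (A.map (Int.cast : ℤ → ℝ)).mulVec v := by
    intro u v; exact Matrix.mulVec_add _ _ _
  let F : (Fin 2 → ℝ) →ᵃ[ℝ] (Fin 2 → ℝ) :=
    { toFun := affineUnimodularMap A b
      linear := Matrix.toLin' (A.map (Int.cast : ℤ → ℝ))
      map_vadd' := by
        intro x v
        simp only [Matrix.toLin'_apply, vadd_eq_add, affineUnimodularMap]
        rw [hmv]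
        abel }
  have hF : affineUnimodularMap A b = F := rfl
  rw [hF, AffineMap.image_convexHull]
  congr 1
  rw [Set.image_insert_eq, Set.image_insert_eq, Set.image_insert_eq, Set.image_singleton]
  have e : ∀ v : Fin 2 → ℤ, F (toReal2 v) = toReal2 (A.mulVec v + b) := fun v => cast_affine A b v
  rw [e, e, e, e]

lemma collinear_cases (a b c : Fin 2 → ℤ) (hd : Ddet a b c = 0) :
    toReal2 a ∈ convexHull ℝ ({toReal2 b, toReal2 c} : Set (Fin 2 → ℝ)) ∨
    toReal2 b ∈ convexHull ℝ ({toReal2 a, toReal2 c} : Set (Fin 2 → ℝ)) ∨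
    toReal2 c ∈ convexHull ℝ ({toReal2 a, toReal2 b} : Set (Fin 2 → ℝ)) := by
  by_cases hba : b = a
  · right; left
    rw [hba]
    exact subset_convexHull ℝ _ (Set.mem_insert _ _)
  -- b ≠ a, so u ≠ 0
  have hu : (b 0 - a 0 : ℤ) ≠ 0 ∨ (b 1 - a 1 : ℤ) ≠ 0 := by
    by_contra h
    push_neg at h
    have h0 : b 0 = a 0 := by omega
    have h1 : b 1 = a 1 := by omega
    exact hba (by funext i; fin_cases i; exacts [h0, h1])
  unfold Ddet at hd
  have hdR : ((b 0 : ℝ) - a 0) * ((c 1 : ℝ) - a 1) - ((b 1 : ℝ) - a 1) * ((c 0 : ℝ) - a 0) = 0 := by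
    have := congrArg (Int.cast : ℤ → ℝ) hd
    push_cast at this
    linarith
  -- find real t with c - a = t • (b - a)
  obtain ⟨t, ht0, ht1⟩ : ∃ t : ℝ, ((c 0 : ℝ) - a 0) = t * ((b 0 : ℝ) - a 0) ∧
      ((c 1 : ℝ) - a 1) = t * ((b 1 : ℝ) - a 1) := by
    rcases hu with hu0 | hu1
    · have hu0' : ((b 0 : ℝ) - a 0) ≠ 0 := by
        intro h
        apply hu0
        have h2 : (b 0 : ℝ) = a 0 := by linarith
        have h3 : b 0 = a 0 := by exact_mod_cast h2
        omega
      refine ⟨((c 0 : ℝ) - a 0) / ((b 0 : ℝ) - a 0), by field_simp, ?_⟩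
      field_simp
      nlinarith [hdR]
    · have hu1' : ((b 1 : ℝ) - a 1) ≠ 0 := by
        intro h
        apply hu1
        have h2 : (b 1 : ℝ) = a 1 := by linarith
        have h3 : b 1 = a 1 := by exact_mod_cast h2
        omega
      refine ⟨((c 1 : ℝ) - a 1) / ((b 1 : ℝ) - a 1), ?_, by field_simp⟩
      field_simp
      nlinarith [hdR]
  rcases le_or_gt t 0 with ht | htpos
  · -- a ∈ [b, c]
    left
    have h1t : (0:ℝ) < 1 - t := by linarith
    have key0 : (a 0 : ℝ) = (-t/(1-t)) * b 0 + (1/(1-t)) * c 0 := by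
      field_simp
      linear_combination (-1) * ht0
    have key1 : (a 1 : ℝ) = (-t/(1-t)) * b 1 + (1/(1-t)) * c 1 := by
      field_simp
      linear_combination (-1) * ht1
    have hm := mem_hull2 (toReal2 b) (toReal2 c) (-t / (1 - t)) (1 / (1 - t))
      (div_nonneg (by linarith) (by linarith)) (by positivity) (by field_simp; ring)
    have : toReal2 a = (-t / (1 - t)) • toReal2 b + (1 / (1 - t)) • toReal2 c := by
      funext i
      fin_cases i
      · exact key0
      · exact key1
    rwa [this]
  · rcases le_or_gt t 1 with htle | htgt
    · -- c ∈ [a, b]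
      right; right
      have key0 : (c 0 : ℝ) = (1-t) * a 0 + t * b 0 := by linear_combination ht0
      have key1 : (c 1 : ℝ) = (1-t) * a 1 + t * b 1 := by linear_combination ht1
      have hm := mem_hull2 (toReal2 a) (toReal2 b) (1 - t) t (by linarith) (by linarith) (by ring)
      have : toReal2 c = (1 - t) • toReal2 a + t • toReal2 b := by
        funext i
        fin_cases i
        · exact key0
        · exact key1
      rwa [this]
    · -- b ∈ [a, c]
      right; left
      have htne : t ≠ 0 := by linarith
      have key0 : (b 0 : ℝ) = (1 - 1/t) * a 0 + (1/t) * c 0 := by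
        field_simp
        linear_combination (-1) * ht0
      have key1 : (b 1 : ℝ) = (1 - 1/t) * a 1 + (1/t) * c 1 := by
        field_simp
        linear_combination (-1) * ht1
      have hm := mem_hull2 (toReal2 a) (toReal2 c) (1 - 1/t) (1/t)
        (by rw [sub_nonneg, div_le_one (by linarith)]; linarith)
        (by positivity) (by ring)
      have : toReal2 b = (1 - 1/t) • toReal2 a + (1/t) • toReal2 c := by
        funext i
        fin_cases i
        · exact key0
        · exact key1
      rwa [this]

lemma tri_det (a b c : Fin 2 → ℤ) (hd : Ddet a b c ≠ 0)
    (H : ∀ p : Fin 2 → ℤ,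
      toReal2 p ∈ convexHull ℝ ({toReal2 a, toReal2 b, toReal2 c} : Set (Fin 2 → ℝ)) →
        p = a ∨ p = b ∨ p = c) :
    Ddet a b c = 1 ∨ Ddet a b c = -1 := by
  by_contra hcon
  push_neg at hcon
  obtain ⟨h1, h2⟩ := hcon
  set d := Ddet a b c with hdef
  have hD : (b 0 - a 0) * (c 1 - a 1) - (b 1 - a 1) * (c 0 - a 0) = d := rfl
  set N : ℤ := (d.natAbs : ℤ) with hNdef
  have hN2 : 2 ≤ N := by
    have := Int.natAbs_pos.mpr hd
    omega
  have hNd : N ∣ d := Int.natAbs_dvd.mpr dvd_rfl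
  have hdN : d ∣ N := Int.dvd_natAbs.mpr dvd_rfl
  -- find s t with good column
  obtain ⟨s, t, m0, m1, hr0, hr1, hst⟩ :
      ∃ s t m0 m1 : ℤ, (b 0 - a 0) * s + (c 0 - a 0) * t = d * m0 ∧
        (b 1 - a 1) * s + (c 1 - a 1) * t = d * m1 ∧ ¬(d ∣ s ∧ d ∣ t) := by
    by_cases hc1 : d ∣ (c 1 - a 1) ∧ d ∣ (b 1 - a 1)
    · by_cases hc2 : d ∣ (c 0 - a 0) ∧ d ∣ (b 0 - a 0)
      · exfalso
        obtain ⟨k1, hk1⟩ := hc1.1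
        obtain ⟨k2, hk2⟩ := hc1.2
        obtain ⟨k3, hk3⟩ := hc2.1
        obtain ⟨k4, hk4⟩ := hc2.2
        have hkey : d = d * d * (k4 * k1 - k2 * k3) := by
          calc d = (b 0 - a 0) * (c 1 - a 1) - (b 1 - a 1) * (c 0 - a 0) := hD.symm
          _ = d * d * (k4 * k1 - k2 * k3) := by rw [hk1, hk2, hk3, hk4]; ring
        have hd1 : d * (1 - d * (k4 * k1 - k2 * k3)) = 0 := by linarith [hkey]
        rcases mul_eq_zero.mp hd1 with h | h
        · exact hd h
        · have h3 : d * (k4 * k1 - k2 * k3) = 1 := by linarith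
          have h4 : d ∣ 1 := ⟨_, h3.symm⟩
          rcases Int.isUnit_iff.mp (isUnit_of_dvd_one h4) with h5 | h5
          · exact h1 h5
          · exact h2 h5
      · refine ⟨-(c 0 - a 0), b 0 - a 0, 0, 1, by ring, ?_, ?_⟩
        · rw [← hD]; ring
        · intro ⟨hs, ht⟩
          exact hc2 ⟨dvd_neg.mp hs, ht⟩
    · refine ⟨c 1 - a 1, -(b 1 - a 1), 1, 0, ?_, by ring, ?_⟩
      · rw [← hD]; ring
      · intro ⟨hs, ht⟩
        exact hc1 ⟨hs, dvd_neg.mp ht⟩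
  -- residues
  have hNpos : (0:ℤ) < N := by omega
  have hNne : N ≠ 0 := by omega
  set s' : ℤ := s % N with hs'def
  set t' : ℤ := t % N with ht'def
  have hs'0 : 0 ≤ s' := Int.emod_nonneg s hNne
  have hs'lt : s' < N := Int.emod_lt_of_pos s hNpos
  have ht'0 : 0 ≤ t' := Int.emod_nonneg t hNne
  have ht'lt : t' < N := Int.emod_lt_of_pos t hNpos
  have hne : ¬(s' = 0 ∧ t' = 0) := by
    rintro ⟨h0, h0'⟩
    exact hst ⟨Int.natAbs_dvd.mp (Int.dvd_of_emod_eq_zero h0),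
      Int.natAbs_dvd.mp (Int.dvd_of_emod_eq_zero h0')⟩
  obtain ⟨dd, hdd⟩ := hNd
  have e1 := Int.mul_ediv_add_emod s N
  have e2 := Int.mul_ediv_add_emod t N
  rw [← hs'def] at e1
  rw [← ht'def] at e2
  -- exact divisibility of rows
  obtain ⟨k0, hk0⟩ : ∃ k0, (b 0 - a 0) * s' + (c 0 - a 0) * t' = N * k0 := by
    refine ⟨dd * m0 - ((b 0 - a 0) * (s / N) + (c 0 - a 0) * (t / N)), ?_⟩
    linear_combination hr0 + m0 * hdd + (b 0 - a 0) * e1 + (c 0 - a 0) * e2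
  obtain ⟨k1, hk1⟩ : ∃ k1, (b 1 - a 1) * s' + (c 1 - a 1) * t' = N * k1 := by
    refine ⟨dd * m1 - ((b 1 - a 1) * (s / N) + (c 1 - a 1) * (t / N)), ?_⟩
    linear_combination hr1 + m1 * hdd + (b 1 - a 1) * e1 + (c 1 - a 1) * e2
  -- key determinant identity
  have key : ∀ p0 p1 : ℤ,
      (b 0 - a 0) * s' + (c 0 - a 0) * t' = N * p0 →
      (b 1 - a 1) * s' + (c 1 - a 1) * t' = N * p1 →
      d * s' = N * ((c 1 - a 1) * p0 - (c 0 - a 0) * p1) ∧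
      d * t' = N * ((b 0 - a 0) * p1 - (b 1 - a 1) * p0) := by
    intro p0 p1 h0 h1
    constructor
    · linear_combination (c 1 - a 1) * h0 - (c 0 - a 0) * h1 - s' * hD
    · linear_combination (b 0 - a 0) * h1 - (b 1 - a 1) * h0 - t' * hD
  -- real coefficients
  have hNR : (0:ℝ) < (N:ℝ) := by exact_mod_cast hNpos
  have hNRne : (N:ℝ) ≠ 0 := ne_of_gt hNR
  set α : ℝ := (s' : ℝ) / (N : ℝ) with hα
  set β : ℝ := (t' : ℝ) / (N : ℝ) with hβ
  have hα0 : 0 ≤ α := div_nonneg (by exact_mod_cast hs'0) (le_of_lt hNR)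
  have hβ0 : 0 ≤ β := div_nonneg (by exact_mod_cast ht'0) (le_of_lt hNR)
  have hα1 : α ≤ 1 := by rw [hα, div_le_one hNR]; exact_mod_cast le_of_lt hs'lt
  have hβ1 : β ≤ 1 := by rw [hβ, div_le_one hNR]; exact_mod_cast le_of_lt ht'lt
  have hk0R : ((b 0 : ℝ) - a 0) * s' + ((c 0 : ℝ) - a 0) * t' = N * k0 := by
    exact_mod_cast congrArg (Int.cast : ℤ → ℝ) hk0
  have hk1R : ((b 1 : ℝ) - a 1) * s' + ((c 1 : ℝ) - a 1) * t' = N * k1 := by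
    exact_mod_cast congrArg (Int.cast : ℤ → ℝ) hk1
  rcases le_or_gt (s' + t') N with hcase | hcase
  · -- q in the triangle
    set q : Fin 2 → ℤ := ![a 0 + k0, a 1 + k1] with hq
    have hcomb : toReal2 q = (1 - α - β) • toReal2 a + α • toReal2 b + β • toReal2 c := by
      funext i
      fin_cases i
      · show ((a 0 + k0 : ℤ) : ℝ) = (1 - α - β) * a 0 + α * b 0 + β * c 0
        push_cast
        rw [hα, hβ]
        field_simp
        linear_combination -hk0R
      · show ((a 1 + k1 : ℤ) : ℝ) = (1 - α - β) * a 1 + α * b 1 + β * c 1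
        push_cast
        rw [hα, hβ]
        field_simp
        linear_combination -hk1R
    have hsum : (1 - α - β) + α + β = 1 := by ring
    have h1αβ : 0 ≤ 1 - α - β := by
      have : α + β ≤ 1 := by
        rw [hα, hβ, ← add_div, div_le_one hNR]
        exact_mod_cast hcase
      linarith
    have hmem := mem_hull3 (toReal2 a) (toReal2 b) (toReal2 c) (1 - α - β) α β h1αβ hα0 hβ0 hsum
    rw [← hcomb] at hmem
    rcases H q hmem with hqa | hqb | hqc
    · have c0 := congrFun hqa 0
      have c1 := congrFun hqa 1
      simp only [hq, Matrix.cons_val_zero, Matrix.cons_val_one, Matrix.head_cons] at c0 c1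
      have hk0' : k0 = 0 := by omega
      have hk1' : k1 = 0 := by omega
      obtain ⟨K0, K1⟩ := key 0 0 (by rw [hk0, hk0']) (by rw [hk1, hk1'])
      have hs0 : s' = 0 := by
        have hz : d * s' = 0 := by linear_combination K0
        rcases mul_eq_zero.mp hz with h | h
        · exact absurd h hd
        · exact h
      have ht0 : t' = 0 := by
        have hz : d * t' = 0 := by linear_combination K1
        rcases mul_eq_zero.mp hz with h | h
        · exact absurd h hd
        · exact h
      exact hne ⟨hs0, ht0⟩
    · have c0 := congrFun hqb 0
      have c1 := congrFun hqb 1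
      simp only [hq, Matrix.cons_val_zero, Matrix.cons_val_one, Matrix.head_cons] at c0 c1
      have hk0' : k0 = b 0 - a 0 := by omega
      have hk1' : k1 = b 1 - a 1 := by omega
      obtain ⟨K0, K1⟩ := key (b 0 - a 0) (b 1 - a 1) (by rw [hk0, hk0']) (by rw [hk1, hk1'])
      have hXd : (c 1 - a 1) * (b 0 - a 0) - (c 0 - a 0) * (b 1 - a 1) = d := by
        linear_combination hD
      rw [hXd] at K0
      have : d * s' = d * N := by rw [K0]; ring
      have hsN : s' = N := mul_left_cancel₀ hd this
      omega
    · have c0 := congrFun hqc 0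
      have c1 := congrFun hqc 1
      simp only [hq, Matrix.cons_val_zero, Matrix.cons_val_one, Matrix.head_cons] at c0 c1
      have hk0' : k0 = c 0 - a 0 := by omega
      have hk1' : k1 = c 1 - a 1 := by omega
      obtain ⟨K0, K1⟩ := key (c 0 - a 0) (c 1 - a 1) (by rw [hk0, hk0']) (by rw [hk1, hk1'])
      have hYd : (b 0 - a 0) * (c 1 - a 1) - (b 1 - a 1) * (c 0 - a 0) = d := hD
      rw [hYd] at K1
      have : d * t' = d * N := by rw [K1]; ring
      have htN : t' = N := mul_left_cancel₀ hd this
      omega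
  · -- reflected point q2
    set q : Fin 2 → ℤ := ![b 0 + c 0 - a 0 - k0, b 1 + c 1 - a 1 - k1] with hq
    have hcomb : toReal2 q = (α + β - 1) • toReal2 a + (1 - α) • toReal2 b + (1 - β) • toReal2 c := by
      funext i
      fin_cases i
      · show ((b 0 + c 0 - a 0 - k0 : ℤ) : ℝ) = (α + β - 1) * a 0 + (1 - α) * b 0 + (1 - β) * c 0
        push_cast
        rw [hα, hβ]
        field_simp
        linear_combination hk0R
      · show ((b 1 + c 1 - a 1 - k1 : ℤ) : ℝ) = (α + β - 1) * a 1 + (1 - α) * b 1 + (1 - β) * c 1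
        push_cast
        rw [hα, hβ]
        field_simp
        linear_combination hk1R
    have hsum : (α + β - 1) + (1 - α) + (1 - β) = 1 := by ring
    have hαβ1 : 0 ≤ α + β - 1 := by
      have : 1 ≤ α + β := by
        rw [hα, hβ, ← add_div, le_div_iff₀ hNR, one_mul]
        exact_mod_cast le_of_lt hcase
      linarith
    have hmem := mem_hull3 (toReal2 a) (toReal2 b) (toReal2 c) (α + β - 1) (1 - α) (1 - β)
      hαβ1 (by linarith) (by linarith) hsum
    rw [← hcomb] at hmem
    rcases H q hmem with hqa | hqb | hqc
    · have c0 := congrFun hqa 0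
      have c1 := congrFun hqa 1
      simp only [hq, Matrix.cons_val_zero, Matrix.cons_val_one, Matrix.head_cons] at c0 c1
      have hk0' : k0 = (b 0 - a 0) + (c 0 - a 0) := by omega
      have hk1' : k1 = (b 1 - a 1) + (c 1 - a 1) := by omega
      obtain ⟨K0, K1⟩ := key ((b 0 - a 0) + (c 0 - a 0)) ((b 1 - a 1) + (c 1 - a 1))
        (by rw [hk0, hk0']) (by rw [hk1, hk1'])
      have hXd : (c 1 - a 1) * ((b 0 - a 0) + (c 0 - a 0)) - (c 0 - a 0) * ((b 1 - a 1) + (c 1 - a 1)) = d := by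
        linear_combination hD
      rw [hXd] at K0
      have : d * s' = d * N := by rw [K0]; ring
      have hsN : s' = N := mul_left_cancel₀ hd this
      omega
    · have c0 := congrFun hqb 0
      have c1 := congrFun hqb 1
      simp only [hq, Matrix.cons_val_zero, Matrix.cons_val_one, Matrix.head_cons] at c0 c1
      have hk0' : k0 = c 0 - a 0 := by omega
      have hk1' : k1 = c 1 - a 1 := by omega
      obtain ⟨K0, K1⟩ := key (c 0 - a 0) (c 1 - a 1) (by rw [hk0, hk0']) (by rw [hk1, hk1'])
      have hYd : (b 0 - a 0) * (c 1 - a 1) - (b 1 - a 1) * (c 0 - a 0) = d := hD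
      rw [hYd] at K1
      have : d * t' = d * N := by rw [K1]; ring
      have htN : t' = N := mul_left_cancel₀ hd this
      omega
    · have c0 := congrFun hqc 0
      have c1 := congrFun hqc 1
      simp only [hq, Matrix.cons_val_zero, Matrix.cons_val_one, Matrix.head_cons] at c0 c1
      have hk0' : k0 = b 0 - a 0 := by omega
      have hk1' : k1 = b 1 - a 1 := by omega
      obtain ⟨K0, K1⟩ := key (b 0 - a 0) (b 1 - a 1) (by rw [hk0, hk0']) (by rw [hk1, hk1'])
      have hXd : (c 1 - a 1) * (b 0 - a 0) - (c 0 - a 0) * (b 1 - a 1) = d := by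
        linear_combination hD
      rw [hXd] at K0
      have : d * s' = d * N := by rw [K0]; ring
      have hsN : s' = N := mul_left_cancel₀ hd this
      omega

lemma set_M : ({toReal2 ![0,0], toReal2 ![1,0], toReal2 ![0,1], toReal2 ![1,1]} : Set (Fin 2 → ℝ))
    = ({![0,0], ![1,0], ![1,1], ![0,1]} : Set (Fin 2 → ℝ)) := by
  rw [tl00, tl10, tl01, tl11]
  ext x
  simp only [Set.mem_insert_iff, Set.mem_singleton_iff]
  tauto

lemma set_B1 : ({toReal2 ![0,0], toReal2 ![1,0], toReal2 ![1,1], toReal2 ![0,1]} : Set (Fin 2 → ℝ))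
    = ({![0,0], ![1,0], ![1,1], ![0,1]} : Set (Fin 2 → ℝ)) := by
  rw [tl00, tl10, tl11, tl01]

lemma set_B2 : ({toReal2 ![0,0], toReal2 ![1,1], toReal2 ![0,1], toReal2 ![1,0]} : Set (Fin 2 → ℝ))
    = ({![0,0], ![1,0], ![1,1], ![0,1]} : Set (Fin 2 → ℝ)) := by
  rw [tl00, tl11, tl01, tl10]
  ext x
  simp only [Set.mem_insert_iff, Set.mem_singleton_iff]
  tauto

lemma branchM (v₁ v₂ v₃ v₄ : Fin 2 → ℤ) (e : ℤ) (he : e = 1 ∨ e = -1)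
    (h1 : (v₂ 0 - v₁ 0) * (v₃ 1 - v₁ 1) - (v₂ 1 - v₁ 1) * (v₃ 0 - v₁ 0) = e)
    (hz0 : e * ((v₃ 1 - v₁ 1) * (v₄ 0 - v₁ 0) - (v₃ 0 - v₁ 0) * (v₄ 1 - v₁ 1)) = 1)
    (hz1 : e * ((v₂ 0 - v₁ 0) * (v₄ 1 - v₁ 1) - (v₂ 1 - v₁ 1) * (v₄ 0 - v₁ 0)) = 1) :
    ∃ (A : Matrix (Fin 2) (Fin 2) ℤ) (b : Fin 2 → ℤ),
      (A.det = 1 ∨ A.det = -1) ∧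
      affineUnimodularMap A b ''
          convexHull ℝ ({toReal2 v₁, toReal2 v₂, toReal2 v₃, toReal2 v₄} : Set (Fin 2 → ℝ)) =
        convexHull ℝ ({![0, 0], ![1, 0], ![1, 1], ![0, 1]} : Set (Fin 2 → ℝ)) := by
  have he2 : e ^ 2 = 1 := by rcases he with h | h <;> rw [h] <;> norm_num
  refine ⟨!![e * (v₃ 1 - v₁ 1), -(e * (v₃ 0 - v₁ 0)); -(e * (v₂ 1 - v₁ 1)), e * (v₂ 0 - v₁ 0)], -((!![e * (v₃ 1 - v₁ 1), -(e * (v₃ 0 - v₁ 0)); -(e * (v₂ 1 - v₁ 1)), e * (v₂ 0 - v₁ 0)]).mulVec v₁), ?_, ?_⟩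
  · have hdet : (!![e * (v₃ 1 - v₁ 1), -(e * (v₃ 0 - v₁ 0)); -(e * (v₂ 1 - v₁ 1)), e * (v₂ 0 - v₁ 0)]).det = e := by
      simp only [Matrix.det_fin_two_of]
      linear_combination e ^ 2 * h1 + e * he2
    rcases he with h | h
    · left; rw [hdet, h]
    · right; rw [hdet, h]
  have E1 : (!![e * (v₃ 1 - v₁ 1), -(e * (v₃ 0 - v₁ 0)); -(e * (v₂ 1 - v₁ 1)), e * (v₂ 0 - v₁ 0)]).mulVec v₁ + -((!![e * (v₃ 1 - v₁ 1), -(e * (v₃ 0 - v₁ 0)); -(e * (v₂ 1 - v₁ 1)), e * (v₂ 0 - v₁ 0)]).mulVec v₁) = (![0, 0] : Fin 2 → ℤ) := by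
    refine vec2_eq ?_ ?_ <;> simp only [Matrix.mulVec, dotProduct, Fin.sum_univ_two, Matrix.cons_val', Matrix.cons_val_zero, Matrix.cons_val_one, Matrix.head_cons, Matrix.head_fin_const, Matrix.empty_val', Matrix.cons_val_fin_one, Matrix.of_apply, Pi.add_apply, Pi.neg_apply] <;> ring
  have E2 : (!![e * (v₃ 1 - v₁ 1), -(e * (v₃ 0 - v₁ 0)); -(e * (v₂ 1 - v₁ 1)), e * (v₂ 0 - v₁ 0)]).mulVec v₂ + -((!![e * (v₃ 1 - v₁ 1), -(e * (v₃ 0 - v₁ 0)); -(e * (v₂ 1 - v₁ 1)), e * (v₂ 0 - v₁ 0)]).mulVec v₁) = (![1, 0] : Fin 2 → ℤ) := by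
    refine vec2_eq ?_ ?_
    · simp only [Matrix.mulVec, dotProduct, Fin.sum_univ_two, Matrix.cons_val', Matrix.cons_val_zero, Matrix.cons_val_one, Matrix.head_cons, Matrix.head_fin_const, Matrix.empty_val', Matrix.cons_val_fin_one, Matrix.of_apply, Pi.add_apply, Pi.neg_apply]
      linear_combination e * h1 + he2
    · simp only [Matrix.mulVec, dotProduct, Fin.sum_univ_two, Matrix.cons_val', Matrix.cons_val_zero, Matrix.cons_val_one, Matrix.head_cons, Matrix.head_fin_const, Matrix.empty_val', Matrix.cons_val_fin_one, Matrix.of_apply, Pi.add_apply, Pi.neg_apply]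
      ring
  have E3 : (!![e * (v₃ 1 - v₁ 1), -(e * (v₃ 0 - v₁ 0)); -(e * (v₂ 1 - v₁ 1)), e * (v₂ 0 - v₁ 0)]).mulVec v₃ + -((!![e * (v₃ 1 - v₁ 1), -(e * (v₃ 0 - v₁ 0)); -(e * (v₂ 1 - v₁ 1)), e * (v₂ 0 - v₁ 0)]).mulVec v₁) = (![0, 1] : Fin 2 → ℤ) := by
    refine vec2_eq ?_ ?_
    · simp only [Matrix.mulVec, dotProduct, Fin.sum_univ_two, Matrix.cons_val', Matrix.cons_val_zero, Matrix.cons_val_one, Matrix.head_cons, Matrix.head_fin_const, Matrix.empty_val', Matrix.cons_val_fin_one, Matrix.of_apply, Pi.add_apply, Pi.neg_apply]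
      ring
    · simp only [Matrix.mulVec, dotProduct, Fin.sum_univ_two, Matrix.cons_val', Matrix.cons_val_zero, Matrix.cons_val_one, Matrix.head_cons, Matrix.head_fin_const, Matrix.empty_val', Matrix.cons_val_fin_one, Matrix.of_apply, Pi.add_apply, Pi.neg_apply]
      linear_combination e * h1 + he2
  have E4 : (!![e * (v₃ 1 - v₁ 1), -(e * (v₃ 0 - v₁ 0)); -(e * (v₂ 1 - v₁ 1)), e * (v₂ 0 - v₁ 0)]).mulVec v₄ + -((!![e * (v₃ 1 - v₁ 1), -(e * (v₃ 0 - v₁ 0)); -(e * (v₂ 1 - v₁ 1)), e * (v₂ 0 - v₁ 0)]).mulVec v₁) = (![1, 1] : Fin 2 → ℤ) := by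
    refine vec2_eq ?_ ?_
    · simp only [Matrix.mulVec, dotProduct, Fin.sum_univ_two, Matrix.cons_val', Matrix.cons_val_zero, Matrix.cons_val_one, Matrix.head_cons, Matrix.head_fin_const, Matrix.empty_val', Matrix.cons_val_fin_one, Matrix.of_apply, Pi.add_apply, Pi.neg_apply]
      linear_combination hz0
    · simp only [Matrix.mulVec, dotProduct, Fin.sum_univ_two, Matrix.cons_val', Matrix.cons_val_zero, Matrix.cons_val_one, Matrix.head_cons, Matrix.head_fin_const, Matrix.empty_val', Matrix.cons_val_fin_one, Matrix.of_apply, Pi.add_apply, Pi.neg_apply]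
      linear_combination hz1
  rw [image_hull4, E1, E2, E3, E4, set_M]

lemma branchB1 (v₁ v₂ v₃ v₄ : Fin 2 → ℤ) (e : ℤ) (he : e = 1 ∨ e = -1)
    (h1 : (v₂ 0 - v₁ 0) * (v₃ 1 - v₁ 1) - (v₂ 1 - v₁ 1) * (v₃ 0 - v₁ 0) = e)
    (hz0 : e * ((v₃ 1 - v₁ 1) * (v₄ 0 - v₁ 0) - (v₃ 0 - v₁ 0) * (v₄ 1 - v₁ 1)) = -1)
    (hz1 : e * ((v₂ 0 - v₁ 0) * (v₄ 1 - v₁ 1) - (v₂ 1 - v₁ 1) * (v₄ 0 - v₁ 0)) = 1) :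
    ∃ (A : Matrix (Fin 2) (Fin 2) ℤ) (b : Fin 2 → ℤ),
      (A.det = 1 ∨ A.det = -1) ∧
      affineUnimodularMap A b ''
          convexHull ℝ ({toReal2 v₁, toReal2 v₂, toReal2 v₃, toReal2 v₄} : Set (Fin 2 → ℝ)) =
        convexHull ℝ ({![0, 0], ![1, 0], ![1, 1], ![0, 1]} : Set (Fin 2 → ℝ)) := by
  have he2 : e ^ 2 = 1 := by rcases he with h | h <;> rw [h] <;> norm_num
  refine ⟨!![e * ((v₃ 1 - v₁ 1) - (v₂ 1 - v₁ 1)), e * ((v₂ 0 - v₁ 0) - (v₃ 0 - v₁ 0)); -(e * (v₂ 1 - v₁ 1)), e * (v₂ 0 - v₁ 0)], -((!![e * ((v₃ 1 - v₁ 1) - (v₂ 1 - v₁ 1)), e * ((v₂ 0 - v₁ 0) - (v₃ 0 - v₁ 0)); -(e * (v₂ 1 - v₁ 1)), e * (v₂ 0 - v₁ 0)]).mulVec v₁), ?_, ?_⟩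
  · have hdet : (!![e * ((v₃ 1 - v₁ 1) - (v₂ 1 - v₁ 1)), e * ((v₂ 0 - v₁ 0) - (v₃ 0 - v₁ 0)); -(e * (v₂ 1 - v₁ 1)), e * (v₂ 0 - v₁ 0)]).det = e := by
      simp only [Matrix.det_fin_two_of]
      linear_combination e ^ 2 * h1 + e * he2
    rcases he with h | h
    · left; rw [hdet, h]
    · right; rw [hdet, h]
  have E1 : (!![e * ((v₃ 1 - v₁ 1) - (v₂ 1 - v₁ 1)), e * ((v₂ 0 - v₁ 0) - (v₃ 0 - v₁ 0)); -(e * (v₂ 1 - v₁ 1)), e * (v₂ 0 - v₁ 0)]).mulVec v₁ + -((!![e * ((v₃ 1 - v₁ 1) - (v₂ 1 - v₁ 1)), e * ((v₂ 0 - v₁ 0) - (v₃ 0 - v₁ 0)); -(e * (v₂ 1 - v₁ 1)), e * (v₂ 0 - v₁ 0)]).mulVec v₁) = (![0, 0] : Fin 2 → ℤ) := by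
    refine vec2_eq ?_ ?_ <;> simp only [Matrix.mulVec, dotProduct, Fin.sum_univ_two, Matrix.cons_val', Matrix.cons_val_zero, Matrix.cons_val_one, Matrix.head_cons, Matrix.head_fin_const, Matrix.empty_val', Matrix.cons_val_fin_one, Matrix.of_apply, Pi.add_apply, Pi.neg_apply] <;> ring
  have E2 : (!![e * ((v₃ 1 - v₁ 1) - (v₂ 1 - v₁ 1)), e * ((v₂ 0 - v₁ 0) - (v₃ 0 - v₁ 0)); -(e * (v₂ 1 - v₁ 1)), e * (v₂ 0 - v₁ 0)]).mulVec v₂ + -((!![e * ((v₃ 1 - v₁ 1) - (v₂ 1 - v₁ 1)), e * ((v₂ 0 - v₁ 0) - (v₃ 0 - v₁ 0)); -(e * (v₂ 1 - v₁ 1)), e * (v₂ 0 - v₁ 0)]).mulVec v₁) = (![1, 0] : Fin 2 → ℤ) := by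
    refine vec2_eq ?_ ?_
    · simp only [Matrix.mulVec, dotProduct, Fin.sum_univ_two, Matrix.cons_val', Matrix.cons_val_zero, Matrix.cons_val_one, Matrix.head_cons, Matrix.head_fin_const, Matrix.empty_val', Matrix.cons_val_fin_one, Matrix.of_apply, Pi.add_apply, Pi.neg_apply]
      linear_combination e * h1 + he2
    · simp only [Matrix.mulVec, dotProduct, Fin.sum_univ_two, Matrix.cons_val', Matrix.cons_val_zero, Matrix.cons_val_one, Matrix.head_cons, Matrix.head_fin_const, Matrix.empty_val', Matrix.cons_val_fin_one, Matrix.of_apply, Pi.add_apply, Pi.neg_apply]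
      ring
  have E3 : (!![e * ((v₃ 1 - v₁ 1) - (v₂ 1 - v₁ 1)), e * ((v₂ 0 - v₁ 0) - (v₃ 0 - v₁ 0)); -(e * (v₂ 1 - v₁ 1)), e * (v₂ 0 - v₁ 0)]).mulVec v₃ + -((!![e * ((v₃ 1 - v₁ 1) - (v₂ 1 - v₁ 1)), e * ((v₂ 0 - v₁ 0) - (v₃ 0 - v₁ 0)); -(e * (v₂ 1 - v₁ 1)), e * (v₂ 0 - v₁ 0)]).mulVec v₁) = (![1, 1] : Fin 2 → ℤ) := by
    refine vec2_eq ?_ ?_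
    · simp only [Matrix.mulVec, dotProduct, Fin.sum_univ_two, Matrix.cons_val', Matrix.cons_val_zero, Matrix.cons_val_one, Matrix.head_cons, Matrix.head_fin_const, Matrix.empty_val', Matrix.cons_val_fin_one, Matrix.of_apply, Pi.add_apply, Pi.neg_apply]
      linear_combination e * h1 + he2
    · simp only [Matrix.mulVec, dotProduct, Fin.sum_univ_two, Matrix.cons_val', Matrix.cons_val_zero, Matrix.cons_val_one, Matrix.head_cons, Matrix.head_fin_const, Matrix.empty_val', Matrix.cons_val_fin_one, Matrix.of_apply, Pi.add_apply, Pi.neg_apply]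
      linear_combination e * h1 + he2
  have E4 : (!![e * ((v₃ 1 - v₁ 1) - (v₂ 1 - v₁ 1)), e * ((v₂ 0 - v₁ 0) - (v₃ 0 - v₁ 0)); -(e * (v₂ 1 - v₁ 1)), e * (v₂ 0 - v₁ 0)]).mulVec v₄ + -((!![e * ((v₃ 1 - v₁ 1) - (v₂ 1 - v₁ 1)), e * ((v₂ 0 - v₁ 0) - (v₃ 0 - v₁ 0)); -(e * (v₂ 1 - v₁ 1)), e * (v₂ 0 - v₁ 0)]).mulVec v₁) = (![0, 1] : Fin 2 → ℤ) := by
    refine vec2_eq ?_ ?_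
    · simp only [Matrix.mulVec, dotProduct, Fin.sum_univ_two, Matrix.cons_val', Matrix.cons_val_zero, Matrix.cons_val_one, Matrix.head_cons, Matrix.head_fin_const, Matrix.empty_val', Matrix.cons_val_fin_one, Matrix.of_apply, Pi.add_apply, Pi.neg_apply]
      linear_combination hz0 + hz1
    · simp only [Matrix.mulVec, dotProduct, Fin.sum_univ_two, Matrix.cons_val', Matrix.cons_val_zero, Matrix.cons_val_one, Matrix.head_cons, Matrix.head_fin_const, Matrix.empty_val', Matrix.cons_val_fin_one, Matrix.of_apply, Pi.add_apply, Pi.neg_apply]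
      linear_combination hz1
  rw [image_hull4, E1, E2, E3, E4, set_B1]

lemma branchB2 (v₁ v₂ v₃ v₄ : Fin 2 → ℤ) (e : ℤ) (he : e = 1 ∨ e = -1)
    (h1 : (v₂ 0 - v₁ 0) * (v₃ 1 - v₁ 1) - (v₂ 1 - v₁ 1) * (v₃ 0 - v₁ 0) = e)
    (hz0 : e * ((v₃ 1 - v₁ 1) * (v₄ 0 - v₁ 0) - (v₃ 0 - v₁ 0) * (v₄ 1 - v₁ 1)) = 1)
    (hz1 : e * ((v₂ 0 - v₁ 0) * (v₄ 1 - v₁ 1) - (v₂ 1 - v₁ 1) * (v₄ 0 - v₁ 0)) = -1) :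
    ∃ (A : Matrix (Fin 2) (Fin 2) ℤ) (b : Fin 2 → ℤ),
      (A.det = 1 ∨ A.det = -1) ∧
      affineUnimodularMap A b ''
          convexHull ℝ ({toReal2 v₁, toReal2 v₂, toReal2 v₃, toReal2 v₄} : Set (Fin 2 → ℝ)) =
        convexHull ℝ ({![0, 0], ![1, 0], ![1, 1], ![0, 1]} : Set (Fin 2 → ℝ)) := by
  have he2 : e ^ 2 = 1 := by rcases he with h | h <;> rw [h] <;> norm_num
  refine ⟨!![e * (v₃ 1 - v₁ 1), -(e * (v₃ 0 - v₁ 0)); e * ((v₃ 1 - v₁ 1) - (v₂ 1 - v₁ 1)), e * ((v₂ 0 - v₁ 0) - (v₃ 0 - v₁ 0))], -((!![e * (v₃ 1 - v₁ 1), -(e * (v₃ 0 - v₁ 0)); e * ((v₃ 1 - v₁ 1) - (v₂ 1 - v₁ 1)), e * ((v₂ 0 - v₁ 0) - (v₃ 0 - v₁ 0))]).mulVec v₁), ?_, ?_⟩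
  · have hdet : (!![e * (v₃ 1 - v₁ 1), -(e * (v₃ 0 - v₁ 0)); e * ((v₃ 1 - v₁ 1) - (v₂ 1 - v₁ 1)), e * ((v₂ 0 - v₁ 0) - (v₃ 0 - v₁ 0))]).det = e := by
      simp only [Matrix.det_fin_two_of]
      linear_combination e ^ 2 * h1 + e * he2
    rcases he with h | h
    · left; rw [hdet, h]
    · right; rw [hdet, h]
  have E1 : (!![e * (v₃ 1 - v₁ 1), -(e * (v₃ 0 - v₁ 0)); e * ((v₃ 1 - v₁ 1) - (v₂ 1 - v₁ 1)), e * ((v₂ 0 - v₁ 0) - (v₃ 0 - v₁ 0))]).mulVec v₁ + -((!![e * (v₃ 1 - v₁ 1), -(e * (v₃ 0 - v₁ 0)); e * ((v₃ 1 - v₁ 1) - (v₂ 1 - v₁ 1)), e * ((v₂ 0 - v₁ 0) - (v₃ 0 - v₁ 0))]).mulVec v₁) = (![0, 0] : Fin 2 → ℤ) := by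
    refine vec2_eq ?_ ?_ <;> simp only [Matrix.mulVec, dotProduct, Fin.sum_univ_two, Matrix.cons_val', Matrix.cons_val_zero, Matrix.cons_val_one, Matrix.head_cons, Matrix.head_fin_const, Matrix.empty_val', Matrix.cons_val_fin_one, Matrix.of_apply, Pi.add_apply, Pi.neg_apply] <;> ring
  have E2 : (!![e * (v₃ 1 - v₁ 1), -(e * (v₃ 0 - v₁ 0)); e * ((v₃ 1 - v₁ 1) - (v₂ 1 - v₁ 1)), e * ((v₂ 0 - v₁ 0) - (v₃ 0 - v₁ 0))]).mulVec v₂ + -((!![e * (v₃ 1 - v₁ 1), -(e * (v₃ 0 - v₁ 0)); e * ((v₃ 1 - v₁ 1) - (v₂ 1 - v₁ 1)), e * ((v₂ 0 - v₁ 0) - (v₃ 0 - v₁ 0))]).mulVec v₁) = (![1, 1] : Fin 2 → ℤ) := by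
    refine vec2_eq ?_ ?_
    · simp only [Matrix.mulVec, dotProduct, Fin.sum_univ_two, Matrix.cons_val', Matrix.cons_val_zero, Matrix.cons_val_one, Matrix.head_cons, Matrix.head_fin_const, Matrix.empty_val', Matrix.cons_val_fin_one, Matrix.of_apply, Pi.add_apply, Pi.neg_apply]
      linear_combination e * h1 + he2
    · simp only [Matrix.mulVec, dotProduct, Fin.sum_univ_two, Matrix.cons_val', Matrix.cons_val_zero, Matrix.cons_val_one, Matrix.head_cons, Matrix.head_fin_const, Matrix.empty_val', Matrix.cons_val_fin_one, Matrix.of_apply, Pi.add_apply, Pi.neg_apply]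
      linear_combination e * h1 + he2
  have E3 : (!![e * (v₃ 1 - v₁ 1), -(e * (v₃ 0 - v₁ 0)); e * ((v₃ 1 - v₁ 1) - (v₂ 1 - v₁ 1)), e * ((v₂ 0 - v₁ 0) - (v₃ 0 - v₁ 0))]).mulVec v₃ + -((!![e * (v₃ 1 - v₁ 1), -(e * (v₃ 0 - v₁ 0)); e * ((v₃ 1 - v₁ 1) - (v₂ 1 - v₁ 1)), e * ((v₂ 0 - v₁ 0) - (v₃ 0 - v₁ 0))]).mulVec v₁) = (![0, 1] : Fin 2 → ℤ) := by
    refine vec2_eq ?_ ?_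
    · simp only [Matrix.mulVec, dotProduct, Fin.sum_univ_two, Matrix.cons_val', Matrix.cons_val_zero, Matrix.cons_val_one, Matrix.head_cons, Matrix.head_fin_const, Matrix.empty_val', Matrix.cons_val_fin_one, Matrix.of_apply, Pi.add_apply, Pi.neg_apply]
      ring
    · simp only [Matrix.mulVec, dotProduct, Fin.sum_univ_two, Matrix.cons_val', Matrix.cons_val_zero, Matrix.cons_val_one, Matrix.head_cons, Matrix.head_fin_const, Matrix.empty_val', Matrix.cons_val_fin_one, Matrix.of_apply, Pi.add_apply, Pi.neg_apply]
      linear_combination e * h1 + he2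
  have E4 : (!![e * (v₃ 1 - v₁ 1), -(e * (v₃ 0 - v₁ 0)); e * ((v₃ 1 - v₁ 1) - (v₂ 1 - v₁ 1)), e * ((v₂ 0 - v₁ 0) - (v₃ 0 - v₁ 0))]).mulVec v₄ + -((!![e * (v₃ 1 - v₁ 1), -(e * (v₃ 0 - v₁ 0)); e * ((v₃ 1 - v₁ 1) - (v₂ 1 - v₁ 1)), e * ((v₂ 0 - v₁ 0) - (v₃ 0 - v₁ 0))]).mulVec v₁) = (![1, 0] : Fin 2 → ℤ) := by
    refine vec2_eq ?_ ?_
    · simp only [Matrix.mulVec, dotProduct, Fin.sum_univ_two, Matrix.cons_val', Matrix.cons_val_zero, Matrix.cons_val_one, Matrix.head_cons, Matrix.head_fin_const, Matrix.empty_val', Matrix.cons_val_fin_one, Matrix.of_apply, Pi.add_apply, Pi.neg_apply]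
      linear_combination hz0
    · simp only [Matrix.mulVec, dotProduct, Fin.sum_univ_two, Matrix.cons_val', Matrix.cons_val_zero, Matrix.cons_val_one, Matrix.head_cons, Matrix.head_fin_const, Matrix.empty_val', Matrix.cons_val_fin_one, Matrix.of_apply, Pi.add_apply, Pi.neg_apply]
      linear_combination hz0 + hz1
  rw [image_hull4, E1, E2, E3, E4, set_B2]

/-- Four lattice points in convex position (none in the convex hull of the other three,
spanning a two-dimensional `Q = conv{v₁,v₂,v₃,v₄}`) such that the only lattice points of
`Q` are the `vᵢ` form a quadrilateral unimodularly equivalent to the standard square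
`conv{(0,0),(1,0),(1,1),(0,1)}`. -/
theorem lattice_quadrilateral_with_no_extra_lattice_points_is_standard_square
    (v₁ v₂ v₃ v₄ : Fin 2 → ℤ)
    (hconv₁ : toReal2 v₁ ∉ convexHull ℝ ({toReal2 v₂, toReal2 v₃, toReal2 v₄} : Set (Fin 2 → ℝ)))
    (hconv₂ : toReal2 v₂ ∉ convexHull ℝ ({toReal2 v₁, toReal2 v₃, toReal2 v₄} : Set (Fin 2 → ℝ)))
    (hconv₃ : toReal2 v₃ ∉ convexHull ℝ ({toReal2 v₁, toReal2 v₂, toReal2 v₄} : Set (Fin 2 → ℝ)))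
    (hconv₄ : toReal2 v₄ ∉ convexHull ℝ ({toReal2 v₁, toReal2 v₂, toReal2 v₃} : Set (Fin 2 → ℝ)))
    (hdim : ¬ Collinear ℝ ({toReal2 v₁, toReal2 v₂, toReal2 v₃, toReal2 v₄} : Set (Fin 2 → ℝ)))
    (hlat : ∀ p : Fin 2 → ℤ,
      toReal2 p ∈
          convexHull ℝ ({toReal2 v₁, toReal2 v₂, toReal2 v₃, toReal2 v₄} : Set (Fin 2 → ℝ)) ↔
        p = v₁ ∨ p = v₂ ∨ p = v₃ ∨ p = v₄) :
    ∃ (A : Matrix (Fin 2) (Fin 2) ℤ) (b : Fin 2 → ℤ),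
      (A.det = 1 ∨ A.det = -1) ∧
      affineUnimodularMap A b ''
          convexHull ℝ ({toReal2 v₁, toReal2 v₂, toReal2 v₃, toReal2 v₄} : Set (Fin 2 → ℝ)) =
        convexHull ℝ ({![0, 0], ![1, 0], ![1, 1], ![0, 1]} : Set (Fin 2 → ℝ)) := by
  classical
  -- nondegeneracy of each triangle
  have hD1 : Ddet v₁ v₂ v₃ ≠ 0 := by
    intro h0
    rcases collinear_cases _ _ _ h0 with h | h | h
    · exact hconv₁ (convexHull_mono (by intro x hx; simp only [Set.mem_insert_iff, Set.mem_singleton_iff] at hx ⊢; tauto) h)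
    · exact hconv₂ (convexHull_mono (by intro x hx; simp only [Set.mem_insert_iff, Set.mem_singleton_iff] at hx ⊢; tauto) h)
    · exact hconv₃ (convexHull_mono (by intro x hx; simp only [Set.mem_insert_iff, Set.mem_singleton_iff] at hx ⊢; tauto) h)
  have hD2 : Ddet v₁ v₂ v₄ ≠ 0 := by
    intro h0
    rcases collinear_cases _ _ _ h0 with h | h | h
    · exact hconv₁ (convexHull_mono (by intro x hx; simp only [Set.mem_insert_iff, Set.mem_singleton_iff] at hx ⊢; tauto) h)
    · exact hconv₂ (convexHull_mono (by intro x hx; simp only [Set.mem_insert_iff, Set.mem_singleton_iff] at hx ⊢; tauto) h)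
    · exact hconv₄ (convexHull_mono (by intro x hx; simp only [Set.mem_insert_iff, Set.mem_singleton_iff] at hx ⊢; tauto) h)
  have hD3 : Ddet v₁ v₃ v₄ ≠ 0 := by
    intro h0
    rcases collinear_cases _ _ _ h0 with h | h | h
    · exact hconv₁ (convexHull_mono (by intro x hx; simp only [Set.mem_insert_iff, Set.mem_singleton_iff] at hx ⊢; tauto) h)
    · exact hconv₃ (convexHull_mono (by intro x hx; simp only [Set.mem_insert_iff, Set.mem_singleton_iff] at hx ⊢; tauto) h)
    · exact hconv₄ (convexHull_mono (by intro x hx; simp only [Set.mem_insert_iff, Set.mem_singleton_iff] at hx ⊢; tauto) h)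
  have hD4 : Ddet v₂ v₃ v₄ ≠ 0 := by
    intro h0
    rcases collinear_cases _ _ _ h0 with h | h | h
    · exact hconv₂ (convexHull_mono (by intro x hx; simp only [Set.mem_insert_iff, Set.mem_singleton_iff] at hx ⊢; tauto) h)
    · exact hconv₃ (convexHull_mono (by intro x hx; simp only [Set.mem_insert_iff, Set.mem_singleton_iff] at hx ⊢; tauto) h)
    · exact hconv₄ (convexHull_mono (by intro x hx; simp only [Set.mem_insert_iff, Set.mem_singleton_iff] at hx ⊢; tauto) h)
  -- each triangle contains no other lattice point
  have H123 : ∀ p : Fin 2 → ℤ,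
      toReal2 p ∈ convexHull ℝ ({toReal2 v₁, toReal2 v₂, toReal2 v₃} : Set (Fin 2 → ℝ)) →
        p = v₁ ∨ p = v₂ ∨ p = v₃ := by
    intro p hp
    rcases (hlat p).mp (convexHull_mono (by intro x hx; simp only [Set.mem_insert_iff, Set.mem_singleton_iff] at hx ⊢; tauto) hp) with h | h | h | h
    · exact Or.inl h
    · exact Or.inr (Or.inl h)
    · exact Or.inr (Or.inr h)
    · subst h; exact absurd hp hconv₄
  have H124 : ∀ p : Fin 2 → ℤ,
      toReal2 p ∈ convexHull ℝ ({toReal2 v₁, toReal2 v₂, toReal2 v₄} : Set (Fin 2 → ℝ)) →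
        p = v₁ ∨ p = v₂ ∨ p = v₄ := by
    intro p hp
    rcases (hlat p).mp (convexHull_mono (by intro x hx; simp only [Set.mem_insert_iff, Set.mem_singleton_iff] at hx ⊢; tauto) hp) with h | h | h | h
    · exact Or.inl h
    · exact Or.inr (Or.inl h)
    · subst h; exact absurd hp hconv₃
    · exact Or.inr (Or.inr h)
  have H134 : ∀ p : Fin 2 → ℤ,
      toReal2 p ∈ convexHull ℝ ({toReal2 v₁, toReal2 v₃, toReal2 v₄} : Set (Fin 2 → ℝ)) →
        p = v₁ ∨ p = v₃ ∨ p = v₄ := by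
    intro p hp
    rcases (hlat p).mp (convexHull_mono (by intro x hx; simp only [Set.mem_insert_iff, Set.mem_singleton_iff] at hx ⊢; tauto) hp) with h | h | h | h
    · exact Or.inl h
    · subst h; exact absurd hp hconv₂
    · exact Or.inr (Or.inl h)
    · exact Or.inr (Or.inr h)
  have H234 : ∀ p : Fin 2 → ℤ,
      toReal2 p ∈ convexHull ℝ ({toReal2 v₂, toReal2 v₃, toReal2 v₄} : Set (Fin 2 → ℝ)) →
        p = v₂ ∨ p = v₃ ∨ p = v₄ := by
    intro p hp
    rcases (hlat p).mp (convexHull_mono (by intro x hx; simp only [Set.mem_insert_iff, Set.mem_singleton_iff] at hx ⊢; tauto) hp) with h | h | h | h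
    · subst h; exact absurd hp hconv₁
    · exact Or.inl h
    · exact Or.inr (Or.inl h)
    · exact Or.inr (Or.inr h)
  have h1 := tri_det v₁ v₂ v₃ hD1 H123
  have h2 := tri_det v₁ v₂ v₄ hD2 H124
  have h3 := tri_det v₁ v₃ v₄ hD3 H134
  have h4 := tri_det v₂ v₃ v₄ hD4 H234
  unfold Ddet at h1 h2 h3 h4
  rcases h1 with h1 | h1 <;> rcases h2 with h2 | h2 <;> rcases h3 with h3 | h3
  · exact branchB1 v₁ v₂ v₃ v₄ 1 (Or.inl rfl) h1 (by linear_combination -h3) (by linear_combination h2)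
  · exact branchM v₁ v₂ v₃ v₄ 1 (Or.inl rfl) h1 (by linear_combination -h3) (by linear_combination h2)
  · exfalso
    have h4' : (v₃ 0 - v₂ 0) * (v₄ 1 - v₂ 1) - (v₃ 1 - v₂ 1) * (v₄ 0 - v₂ 0) = 3 := by
      linear_combination h3 - h2 + h1
    rcases h4 with h | h <;> omega
  · exact branchB2 v₁ v₂ v₃ v₄ 1 (Or.inl rfl) h1 (by linear_combination -h3) (by linear_combination h2)
  · exact branchB2 v₁ v₂ v₃ v₄ (-1) (Or.inr rfl) h1 (by linear_combination h3) (by linear_combination -h2)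
  · exfalso
    have h4' : (v₃ 0 - v₂ 0) * (v₄ 1 - v₂ 1) - (v₃ 1 - v₂ 1) * (v₄ 0 - v₂ 0) = -3 := by
      linear_combination h3 - h2 + h1
    rcases h4 with h | h <;> omega
  · exact branchM v₁ v₂ v₃ v₄ (-1) (Or.inr rfl) h1 (by linear_combination h3) (by linear_combination -h2)
  · exact branchB1 v₁ v₂ v₃ v₄ (-1) (Or.inr rfl) h1 (by linear_combination h3) (by linear_combination -h2)
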